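/- Let φ > 0, L > 0, and 0 < η₀ ≤ η₁ ≤ ... ≤ η_N. For t ∈ [N] let a_t ∈ ℝⁿ with ‖a_t‖₂ ≤ L, and define A_t = η_t I + φ ∑_{τ≤t} a_τ a_τᵀ. With delays as above and d_max^{≤N} = max_{τ≤N} min{d_τ, N-τ}, it holds that ∑_{t=1}^N ‖a_t‖_{A_{t-1}⁻¹} (∑_{τ∈m_t} ‖a_τ‖_{A_{t-1}⁻¹}) ≤ (2n·d_max^{≤N}/φ)·(φL²/η₀ + 1)·ln(1 + φL²N/(η₀n)). -/

import Mathlib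

open Matrix Finset

variable {n : ℕ}

lemma psd_cs {P : Matrix (Fin n) (Fin n) ℝ} (hP : P.PosSemidef) (x y : Fin n → ℝ) :
    (x ⬝ᵥ P *ᵥ y) ^ 2 ≤ (x ⬝ᵥ P *ᵥ x) * (y ⬝ᵥ P *ᵥ y) := by
  obtain ⟨C, rfl⟩ : ∃ C : Matrix (Fin n) (Fin n) ℝ, P = Cᴴ * C := by
    open scoped MatrixOrder in
    have h0 : (0 : Matrix (Fin n) (Fin n) ℝ) ≤ P := Matrix.nonneg_iff_posSemidef.mpr hP
    classical
    open scoped MatrixOrder in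
    obtain ⟨X, hX, -, hXX⟩ :=
      sub_zero P ▸ CFC.exists_sqrt_of_isSelfAdjoint_of_quasispectrumRestricts hP.isHermitian
        (QuasispectrumRestricts.nnreal_of_nonneg h0)
    exact ⟨X, by rw [sub_zero] at hXX; rw [← hXX]; exact congrArg (· * X) hX.star_eq.symm⟩
  have key : ∀ u v : Fin n → ℝ, u ⬝ᵥ (Cᴴ * C) *ᵥ v = (C *ᵥ u) ⬝ᵥ (C *ᵥ v) := by
    intro u v
    rw [← Matrix.mulVec_mulVec, Matrix.dotProduct_mulVec u Cᴴ,
      Matrix.conjTranspose_eq_transpose_of_trivial, ← Matrix.mulVec_transpose,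
      Matrix.transpose_transpose]
  rw [key, key, key]
  simpa [dotProduct, pow_two] using
    Finset.sum_mul_sq_le_sq_mul_sq Finset.univ (C *ᵥ x) (C *ᵥ y)

-- nonnegativity of real psd quadratic form
lemma psd_nonneg {P : Matrix (Fin n) (Fin n) ℝ} (hP : P.PosSemidef) (x : Fin n → ℝ) :
    0 ≤ x ⬝ᵥ P *ᵥ x := by simpa using hP.dotProduct_mulVec_nonneg x

-- anti-monotonicity of the inverse quadratic form
lemma inv_quad_mono {P Q : Matrix (Fin n) (Fin n) ℝ} (hP : P.PosDef) (hQ : Q.PosDef)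
    (hPQ : (Q - P).PosSemidef) (u : Fin n → ℝ) :
    u ⬝ᵥ Q⁻¹ *ᵥ u ≤ u ⬝ᵥ P⁻¹ *ᵥ u := by
  set x := Q⁻¹ *ᵥ u with hx
  set y := P⁻¹ *ᵥ u with hy
  have hQx : Q *ᵥ x = u := by
    rw [hx, Matrix.mulVec_mulVec, Matrix.mul_nonsing_inv _ (isUnit_iff_ne_zero.mpr hQ.det_pos.ne'), Matrix.one_mulVec]
  have hPy : P *ᵥ y = u := by
    rw [hy, Matrix.mulVec_mulVec, Matrix.mul_nonsing_inv _ (isUnit_iff_ne_zero.mpr hP.det_pos.ne'), Matrix.one_mulVec]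
  have hs : u ⬝ᵥ Q⁻¹ *ᵥ u = x ⬝ᵥ Q *ᵥ x := by rw [hQx, ← hx, dotProduct_comm]
  have hr : u ⬝ᵥ P⁻¹ *ᵥ u = y ⬝ᵥ P *ᵥ y := by rw [hPy, ← hy, dotProduct_comm]
  have hsx : x ⬝ᵥ P *ᵥ y = u ⬝ᵥ Q⁻¹ *ᵥ u := by rw [hPy, ← hx, dotProduct_comm]
  have hPle : x ⬝ᵥ P *ᵥ x ≤ x ⬝ᵥ Q *ᵥ x := by
    have := psd_nonneg hPQ x
    rw [Matrix.sub_mulVec, dotProduct_sub] at this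
    linarith
  have hcs := psd_cs hP.posSemidef x y
  rw [hsx] at hcs
  have hsnn : 0 ≤ u ⬝ᵥ Q⁻¹ *ᵥ u := by rw [hs]; exact psd_nonneg hQ.posSemidef x
  have hrnn : 0 ≤ u ⬝ᵥ P⁻¹ *ᵥ u := by rw [hr]; exact psd_nonneg hP.posSemidef y
  rcases eq_or_lt_of_le hsnn with h | h
  · linarith
  · have : (u ⬝ᵥ Q⁻¹ *ᵥ u) ^ 2 ≤ (u ⬝ᵥ Q⁻¹ *ᵥ u) * (u ⬝ᵥ P⁻¹ *ᵥ u) := by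
      calc (u ⬝ᵥ Q⁻¹ *ᵥ u) ^ 2 ≤ (x ⬝ᵥ P *ᵥ x) * (y ⬝ᵥ P *ᵥ y) := hcs
        _ ≤ (x ⬝ᵥ Q *ᵥ x) * (y ⬝ᵥ P *ᵥ y) := by
            apply mul_le_mul_of_nonneg_right hPle; rw [← hr]; exact hrnn
        _ = (u ⬝ᵥ Q⁻¹ *ᵥ u) * (u ⬝ᵥ P⁻¹ *ᵥ u) := by rw [hs, hr]
    nlinarith

variable {n : ℕ}

lemma vecMulVec_self_psd (v : Fin n → ℝ) : (Matrix.vecMulVec v v).PosSemidef := by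
  apply Matrix.PosSemidef.of_dotProduct_mulVec_nonneg
  · ext i j; simp [Matrix.vecMulVec_apply, Matrix.conjTranspose_apply, mul_comm]
  · intro x
    have : Matrix.vecMulVec v v *ᵥ x = (v ⬝ᵥ x) • v := by
      ext i
      simp only [Matrix.mulVec, Matrix.vecMulVec_apply, dotProduct, Pi.smul_apply, smul_eq_mul,
        Finset.sum_mul, Finset.mul_sum]
      apply Finset.sum_congr rfl; intro j _; ring
    rw [this]
    simp only [star_trivial, dotProduct_smul, smul_eq_mul]
    rw [dotProduct_comm x v]
    exact mul_self_nonneg _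

lemma sum_vvt_psd (s : Finset ℕ) (a : ℕ → Fin n → ℝ) :
    (∑ τ ∈ s, Matrix.vecMulVec (a τ) (a τ)).PosSemidef := by
  induction s using Finset.induction_on with
  | empty => simpa using Matrix.PosSemidef.zero
  | insert _ _ h ih => rw [Finset.sum_insert h]; exact ((vecMulVec_self_psd _).add ih)

lemma psd_smul {M : Matrix (Fin n) (Fin n) ℝ} (hM : M.PosSemidef) {c : ℝ} (hc : 0 ≤ c) :
    (c • M).PosSemidef := by
  apply Matrix.PosSemidef.of_dotProduct_mulVec_nonneg
  · unfold Matrix.IsHermitian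
    rw [Matrix.conjTranspose_smul, hM.1.eq]; simp
  · intro x
    rw [Matrix.smul_mulVec, dotProduct_smul, smul_eq_mul]
    exact mul_nonneg hc (by simpa using hM.dotProduct_mulVec_nonneg x)

lemma smul_one_posdef {c : ℝ} (hc : 0 < c) :
    (c • (1 : Matrix (Fin n) (Fin n) ℝ)).PosDef := by
  rw [Matrix.smul_one_eq_diagonal]
  exact (Matrix.posDef_diagonal_iff).mpr fun i => hc

lemma smul_one_psd {c : ℝ} (hc : 0 ≤ c) :
    (c • (1 : Matrix (Fin n) (Fin n) ℝ)).PosSemidef := by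
  rw [Matrix.smul_one_eq_diagonal]
  exact Matrix.PosSemidef.diagonal fun i => hc

lemma inv_smul_one {c : ℝ} (hc : c ≠ 0) :
    (c • (1 : Matrix (Fin n) (Fin n) ℝ))⁻¹ = c⁻¹ • (1 : Matrix (Fin n) (Fin n) ℝ) := by
  apply Matrix.inv_eq_right_inv
  rw [Matrix.smul_mul, Matrix.mul_smul, Matrix.one_mul, smul_smul, mul_inv_cancel₀ hc, one_smul]

lemma log_one_add_ge {u : ℝ} (hu : 0 ≤ u) : u / (1 + u) ≤ Real.log (1 + u) := by
  have h1 : (0:ℝ) < 1 + u := by linarith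
  have := Real.log_le_sub_one_of_pos (show (0:ℝ) < (1+u)⁻¹ by positivity)
  rw [Real.log_inv] at this
  have heq : (1+u)⁻¹ - 1 = -(u / (1+u)) := by field_simp; ring
  linarith [this, heq ▸ this]

lemma det_rank_one_update {B : Matrix (Fin n) (Fin n) ℝ} (hB : B.PosDef) (c : ℝ) (v : Fin n → ℝ) :
    (B + c • Matrix.vecMulVec v v).det = B.det * (1 + c * (v ⬝ᵥ B⁻¹ *ᵥ v)) := by
  have hdet : IsUnit B.det := isUnit_iff_ne_zero.mpr hB.det_pos.ne'
  have h1 : c • Matrix.vecMulVec v v = Matrix.replicateCol Unit (c • v) * Matrix.replicateRow Unit v := by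
    rw [← Matrix.vecMulVec_eq]
    ext i j
    simp [Matrix.vecMulVec_apply, mul_assoc]
  rw [h1, Matrix.det_add_replicateCol_mul_replicateRow hdet]
  congr 1
  rw [Matrix.det_unique]
  have h2 : (Matrix.replicateRow Unit v * B⁻¹ * Matrix.replicateCol Unit (c • v)) default default
      = c * (v ⬝ᵥ B⁻¹ *ᵥ v) := by
    simp only [Matrix.mul_apply, Matrix.replicateRow_apply, Matrix.replicateCol_apply, dotProduct, Matrix.mulVec,
      Finset.mul_sum, Finset.sum_mul, Pi.smul_apply, smul_eq_mul]
    rw [Finset.sum_comm]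
    apply Finset.sum_congr rfl; intro i _
    apply Finset.sum_congr rfl; intro j _
    ring
  rw [Matrix.add_apply, Matrix.one_apply_eq, h2]

lemma trace_eq_sum_eig {A : Matrix (Fin n) (Fin n) ℝ} (hA : A.IsHermitian) :
    A.trace = ∑ i, hA.eigenvalues i := by
  simpa using hA.trace_eq_sum_eigenvalues

lemma det_le_trace_div_pow {A : Matrix (Fin n) (Fin n) ℝ} (hn : 0 < n) (hA : A.PosSemidef) :
    A.det ≤ (A.trace / n) ^ n := by
  have hev := hA.eigenvalues_nonneg
  have hdet : A.det = ∏ i, hA.1.eigenvalues i := by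
    simpa using hA.1.det_eq_prod_eigenvalues
  have htr : A.trace = ∑ i, hA.1.eigenvalues i := trace_eq_sum_eig hA.1
  set lam := hA.1.eigenvalues with hlam
  have hgm : ∏ i, lam i ^ ((1:ℝ)/n) ≤ ∑ i : Fin n, (1/n : ℝ) * lam i := by
    apply Real.geom_mean_le_arith_mean_weighted
    · intro i _; positivity
    · simp [Finset.card_univ]
      field_simp
    · intro i _; exact hev i
  have hn' : (0:ℝ) < n := by exact_mod_cast hn
  have hsum : ∑ i : Fin n, (1/n : ℝ) * lam i = A.trace / n := by
    rw [htr, ← Finset.mul_sum]; ring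
  rw [hsum] at hgm
  have hprodnn : (0:ℝ) ≤ ∏ i, lam i ^ ((1:ℝ)/n) :=
    Finset.prod_nonneg fun i _ => Real.rpow_nonneg (hev i) _
  have hkey : (∏ i, lam i ^ ((1:ℝ)/n)) ^ n = ∏ i, lam i := by
    rw [← Finset.prod_pow]
    apply Finset.prod_congr rfl
    intro i _
    rw [← Real.rpow_natCast (lam i ^ ((1:ℝ)/n)) n, ← Real.rpow_mul (hev i)]
    rw [one_div, inv_mul_cancel₀ hn'.ne', Real.rpow_one]
  calc A.det = (∏ i, lam i ^ ((1:ℝ)/n)) ^ n := by rw [hkey, hdet]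
    _ ≤ (A.trace / n) ^ n := pow_le_pow_left₀ hprodnn hgm n
set_option maxHeartbeats 1000000 in
theorem stmt11 {n : ℕ} (hn : 0 < n) (N : ℕ) (φ L : ℝ) (hφ : 0 < φ) (hL : 0 < L)
    (η : ℕ → ℝ) (hη0 : 0 < η 0) (hηmono : ∀ t, t < N → η t ≤ η (t + 1))
    (a : ℕ → Fin n → ℝ)
    (ha : ∀ t ∈ Finset.Icc 1 N, Real.sqrt (a t ⬝ᵥ a t) ≤ L)
    (d : ℕ → ℕ) (m : ℕ → Finset ℕ)
    (hm : ∀ t, m t = (Finset.Ico 1 t).filter (fun τ => t ≤ τ + d τ))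
    (A : ℕ → Matrix (Fin n) (Fin n) ℝ)
    (hA : ∀ t, A t = η t • (1 : Matrix (Fin n) (Fin n) ℝ)
        + φ • ∑ τ ∈ Finset.Icc 1 t, Matrix.vecMulVec (a τ) (a τ))
    (dmax : ℕ) (hdmax : dmax = (Finset.Icc 1 N).sup (fun τ => min (d τ) (N - τ))) :
    ∑ t ∈ Finset.Icc 1 N,
        Real.sqrt (a t ⬝ᵥ (A (t - 1))⁻¹.mulVec (a t)) *
          (∑ τ ∈ m t, Real.sqrt (a τ ⬝ᵥ (A (t - 1))⁻¹.mulVec (a τ))) ≤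
      2 * n * dmax / φ * (φ * L ^ 2 / η 0 + 1) *
        Real.log (1 + φ * L ^ 2 * N / (η 0 * n)) := by
  classical
  have hη0' : η 0 ≠ 0 := hη0.ne'
  have hnR : (0:ℝ) < n := by exact_mod_cast hn
  have hηle : ∀ t, t ≤ N → η 0 ≤ η t := by
    intro t
    induction t with
    | zero => intro _; exact le_refl _
    | succ k ih => intro hk; exact (ih (by omega)).trans (hηmono k (by omega))
  set B : ℕ → Matrix (Fin n) (Fin n) ℝ :=
    fun t => η 0 • (1 : Matrix (Fin n) (Fin n) ℝ)
      + φ • ∑ τ ∈ Finset.Icc 1 t, Matrix.vecMulVec (a τ) (a τ) with hBdef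
  have hBpsd_part : ∀ t, (φ • ∑ τ ∈ Finset.Icc 1 t, Matrix.vecMulVec (a τ) (a τ)).PosSemidef :=
    fun t => psd_smul (sum_vvt_psd _ _) hφ.le
  have hBpd : ∀ t, (B t).PosDef := fun t =>
    (smul_one_posdef hη0).add_posSemidef (hBpsd_part t)
  have hApd : ∀ t, t ≤ N → (A t).PosDef := by
    intro t ht
    rw [hA t]
    exact (smul_one_posdef (lt_of_lt_of_le hη0 (hηle t ht))).add_posSemidef (hBpsd_part t)
  have hABpsd : ∀ t, t ≤ N → (A t - B t).PosSemidef := by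
    intro t ht
    have heq : A t - B t = (η t - η 0) • (1 : Matrix (Fin n) (Fin n) ℝ) := by
      rw [hA t, hBdef, sub_smul]
      simp only
      abel
    rw [heq]
    exact smul_one_psd (by linarith [hηle t ht])
  have hBmono : ∀ s t : ℕ, s ≤ t → (B t - B s).PosSemidef := by
    intro s t hst
    have hsub : Finset.Icc 1 s ⊆ Finset.Icc 1 t := Finset.Icc_subset_Icc_right hst
    have heq : B t - B s
        = φ • ∑ τ ∈ Finset.Icc 1 t \ Finset.Icc 1 s, Matrix.vecMulVec (a τ) (a τ) := by
      have hsum := Finset.sum_sdiff (f := fun τ => Matrix.vecMulVec (a τ) (a τ)) hsub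
      rw [hBdef]
      simp only
      rw [← hsum, smul_add]
      abel
    rw [heq]
    exact psd_smul (sum_vvt_psd _ _) hφ.le
  set g : ℕ → ℝ := fun τ => a τ ⬝ᵥ (B (τ - 1))⁻¹ *ᵥ a τ with hgdef
  have hgnn : ∀ τ, 0 ≤ g τ := fun τ => psd_nonneg ((hBpd (τ-1)).inv.posSemidef) (a τ)
  have hL2 : ∀ τ, τ ∈ Finset.Icc 1 N → a τ ⬝ᵥ a τ ≤ L^2 := by
    intro τ hτ
    have h := ha τ hτ
    have hnn : 0 ≤ a τ ⬝ᵥ a τ := Finset.sum_nonneg fun i _ => mul_self_nonneg _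
    calc a τ ⬝ᵥ a τ = (Real.sqrt (a τ ⬝ᵥ a τ))^2 := (Real.sq_sqrt hnn).symm
      _ ≤ L^2 := pow_le_pow_left₀ (Real.sqrt_nonneg _) h 2
  have hgle : ∀ τ, τ ∈ Finset.Icc 1 N → g τ ≤ L^2 / η 0 := by
    intro τ hτ
    have h1 : g τ ≤ a τ ⬝ᵥ (B 0)⁻¹ *ᵥ a τ :=
      inv_quad_mono (hBpd 0) (hBpd (τ-1)) (hBmono 0 (τ-1) (Nat.zero_le _)) (a τ)
    have hB0 : B 0 = η 0 • (1 : Matrix (Fin n) (Fin n) ℝ) := by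
      rw [hBdef]; simp
    rw [hB0, inv_smul_one hη0'] at h1
    have h2 : a τ ⬝ᵥ ((η 0)⁻¹ • (1 : Matrix (Fin n) (Fin n) ℝ)) *ᵥ a τ
        = (η 0)⁻¹ * (a τ ⬝ᵥ a τ) := by
      rw [Matrix.smul_mulVec, Matrix.one_mulVec, dotProduct_smul, smul_eq_mul]
    rw [h2] at h1
    calc g τ ≤ (η 0)⁻¹ * (a τ ⬝ᵥ a τ) := h1
      _ ≤ (η 0)⁻¹ * L^2 := by
          apply mul_le_mul_of_nonneg_left (hL2 τ hτ) (by positivity)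
      _ = L^2 / η 0 := by rw [inv_mul_eq_div]
  have hfg : ∀ t ∈ Finset.Icc 1 N, ∀ τ, 1 ≤ τ → τ ≤ t →
      a τ ⬝ᵥ (A (t-1))⁻¹ *ᵥ a τ ≤ g τ := by
    intro t ht τ h1 h2
    obtain ⟨ht1, htN⟩ := Finset.mem_Icc.mp ht
    apply inv_quad_mono (hBpd (τ-1)) (hApd (t-1) (by omega))
    have h3 : A (t-1) - B (τ-1) = (A (t-1) - B (t-1)) + (B (t-1) - B (τ-1)) := by abel
    rw [h3]
    exact (hABpsd (t-1) (by omega)).add (hBmono (τ-1) (t-1) (by omega))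
  -- determinant telescoping
  have hdetstep : ∀ t : ℕ, 1 ≤ t → (B t).det = (B (t-1)).det * (1 + φ * g t) := by
    intro t ht
    obtain ⟨s, rfl⟩ : ∃ s, t = s + 1 := ⟨t - 1, by omega⟩
    have hstep : B (s+1) = B s + φ • Matrix.vecMulVec (a (s+1)) (a (s+1)) := by
      rw [hBdef]
      simp only
      rw [Finset.sum_Icc_succ_top (by omega : 1 ≤ s + 1), smul_add]
      abel
    rw [hstep]
    have hd := det_rank_one_update (hBpd s) φ (a (s+1))
    simpa [hgdef] using hd
  have hpos : ∀ t, 0 < (B t).det := fun t => (hBpd t).det_pos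
  have hgpos : ∀ t, (0:ℝ) < 1 + φ * g t := by
    intro t; have := mul_nonneg hφ.le (hgnn t); linarith
  have htel : ∑ t ∈ Finset.Icc 1 N, Real.log (1 + φ * g t)
      = Real.log (B N).det - Real.log (B 0).det := by
    have hlog : ∀ t : ℕ, 1 ≤ t → Real.log (1 + φ * g t)
        = Real.log (B t).det - Real.log (B (t-1)).det := by
      intro t ht
      rw [hdetstep t ht, Real.log_mul (hpos _).ne' (hgpos t).ne']
      ring
    rw [Finset.sum_congr rfl (fun t htm => hlog t (Finset.mem_Icc.mp htm).1)]
    have htel' : ∀ M : ℕ, ∑ t ∈ Finset.Icc 1 M,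
        (Real.log (B t).det - Real.log (B (t-1)).det)
        = Real.log (B M).det - Real.log (B 0).det := by
      intro M
      induction M with
      | zero => simp
      | succ k ih =>
          rw [Finset.sum_Icc_succ_top (by omega : 1 ≤ k + 1), ih]
          simp
    exact htel' N
  -- trace bound
  have htr_eq : (B N).trace = n * η 0 + φ * ∑ τ ∈ Finset.Icc 1 N, (a τ ⬝ᵥ a τ) := by
    rw [hBdef]
    simp only
    rw [Matrix.trace_add, Matrix.trace_smul, Matrix.trace_one, Matrix.trace_smul,
      Matrix.trace_sum]
    have : ∀ τ, (Matrix.vecMulVec (a τ) (a τ)).trace = a τ ⬝ᵥ a τ := by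
      intro τ
      simp [Matrix.trace, Matrix.diag, Matrix.vecMulVec_apply, dotProduct]
    rw [Finset.sum_congr rfl (fun τ _ => this τ)]
    simp [Fintype.card_fin, mul_comm]
  have hsumL : ∑ τ ∈ Finset.Icc 1 N, (a τ ⬝ᵥ a τ) ≤ N * L^2 := by
    calc ∑ τ ∈ Finset.Icc 1 N, (a τ ⬝ᵥ a τ) ≤ ∑ τ ∈ Finset.Icc 1 N, L^2 :=
          Finset.sum_le_sum fun τ hτ => hL2 τ hτ
      _ = N * L^2 := by rw [Finset.sum_const, Nat.card_Icc]; simp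
  have hsumnn : (0:ℝ) ≤ ∑ τ ∈ Finset.Icc 1 N, (a τ ⬝ᵥ a τ) :=
    Finset.sum_nonneg fun τ _ => Finset.sum_nonneg fun i _ => mul_self_nonneg _
  have htr_ub : (B N).trace ≤ n * η 0 + φ * N * L^2 := by
    rw [htr_eq]
    have := mul_le_mul_of_nonneg_left hsumL hφ.le
    nlinarith
  have htr_lb : (n:ℝ) * η 0 ≤ (B N).trace := by
    rw [htr_eq]
    nlinarith [mul_nonneg hφ.le hsumnn]
  have htrpos : (0:ℝ) < (B N).trace := lt_of_lt_of_le (by positivity) htr_lb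
  have hdetB0 : (B 0).det = η 0 ^ n := by
    have hB0 : B 0 = η 0 • (1 : Matrix (Fin n) (Fin n) ℝ) := by rw [hBdef]; simp
    rw [hB0, Matrix.det_smul, Matrix.det_one, mul_one, Fintype.card_fin]
  have hlogdet : Real.log (B N).det - Real.log (B 0).det
      ≤ n * Real.log (1 + φ * L ^ 2 * N / (η 0 * n)) := by
    have hd := det_le_trace_div_pow hn (hBpd N).posSemidef
    have htn : (0:ℝ) < (B N).trace / n := by positivity
    have h1 : Real.log (B N).det ≤ n * Real.log ((B N).trace / n) := by
      calc Real.log (B N).det ≤ Real.log (((B N).trace / n) ^ n) :=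
            Real.log_le_log (hpos N) hd
        _ = n * Real.log ((B N).trace / n) := by rw [Real.log_pow]
    have h2 : Real.log (B 0).det = n * Real.log (η 0) := by
      rw [hdetB0, Real.log_pow]
    have h3 : Real.log ((B N).trace / n) - Real.log (η 0)
        = Real.log ((B N).trace / (n * η 0)) := by
      rw [← Real.log_div htn.ne' hη0']
      congr 1
      field_simp
    have h4 : (B N).trace / (n * η 0) ≤ 1 + φ * L ^ 2 * N / (η 0 * n) := by
      rw [div_le_iff₀ (by positivity)]
      have : (1 + φ * L ^ 2 * N / (η 0 * n)) * (n * η 0)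
          = n * η 0 + φ * N * L^2 := by field_simp
      rw [this]
      exact htr_ub
    have h5 : Real.log ((B N).trace / (n * η 0))
        ≤ Real.log (1 + φ * L ^ 2 * N / (η 0 * n)) :=
      Real.log_le_log (by positivity) h4
    calc Real.log (B N).det - Real.log (B 0).det
        ≤ n * Real.log ((B N).trace / n) - n * Real.log (η 0) := by
          rw [h2]; linarith
      _ = n * Real.log ((B N).trace / (n * η 0)) := by rw [← h3]; ring
      _ ≤ n * Real.log (1 + φ * L ^ 2 * N / (η 0 * n)) := by
          exact mul_le_mul_of_nonneg_left h5 hnR.le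
  -- cardinality facts
  have hdmax_ge : ∀ τ ∈ Finset.Icc 1 N, min (d τ) (N - τ) ≤ dmax := by
    intro τ hτ; rw [hdmax]; exact Finset.le_sup (f := fun τ => min (d τ) (N - τ)) hτ
  have hcard1 : ∀ t ∈ Finset.Icc 1 N, (m t).card ≤ dmax := by
    intro t ht
    obtain ⟨ht1, htN⟩ := Finset.mem_Icc.mp ht
    have hsub : m t ⊆ Finset.Ico (t - dmax) t := by
      intro τ hτ
      rw [hm t, Finset.mem_filter, Finset.mem_Ico] at hτ
      obtain ⟨⟨hτ1, hτt⟩, hdt⟩ := hτ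
      have hτN : τ ∈ Finset.Icc 1 N := Finset.mem_Icc.mpr ⟨hτ1, by omega⟩
      have h5 : t - τ ≤ dmax :=
        (le_min (by omega) (by omega)).trans (hdmax_ge τ hτN)
      rw [Finset.mem_Ico]
      omega
    calc (m t).card ≤ (Finset.Ico (t - dmax) t).card := Finset.card_le_card hsub
      _ ≤ dmax := by rw [Nat.card_Ico]; omega
  have hcard2 : ∀ τ ∈ Finset.Icc 1 N,
      ((Finset.Icc 1 N).filter (fun t => τ ∈ m t)).card ≤ dmax := by
    intro τ hτ
    have hsub : (Finset.Icc 1 N).filter (fun t => τ ∈ m t) ⊆ Finset.Ioc τ (τ + dmax) := by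
      intro t htm
      rw [Finset.mem_filter] at htm
      obtain ⟨htI, hτm⟩ := htm
      rw [hm t, Finset.mem_filter, Finset.mem_Ico] at hτm
      obtain ⟨⟨hτ1, hτt⟩, hdt⟩ := hτm
      obtain ⟨ht1, htN⟩ := Finset.mem_Icc.mp htI
      have h5 : t - τ ≤ dmax :=
        (le_min (by omega) (by omega)).trans (hdmax_ge τ hτ)
      rw [Finset.mem_Ioc]; omega
    calc _ ≤ (Finset.Ioc τ (τ + dmax)).card := Finset.card_le_card hsub
      _ = dmax := by rw [Nat.card_Ioc]; omega
  have hmsub : ∀ t ∈ Finset.Icc 1 N, m t ⊆ Finset.Icc 1 N := by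
    intro t ht τ hτ
    obtain ⟨ht1, htN⟩ := Finset.mem_Icc.mp ht
    rw [hm t, Finset.mem_filter, Finset.mem_Ico] at hτ
    exact Finset.mem_Icc.mpr ⟨hτ.1.1, by omega⟩
  set S := ∑ τ ∈ Finset.Icc 1 N, g τ with hSdef
  have hSnn : 0 ≤ S := Finset.sum_nonneg fun τ _ => hgnn τ
  -- first sum bound
  have hsw2 : ∑ t ∈ Finset.Icc 1 N, ∑ τ ∈ m t, g t ≤ (dmax : ℝ) * S := by
    have h1 : ∀ t ∈ Finset.Icc 1 N, ∑ τ ∈ m t, g t ≤ (dmax : ℝ) * g t := by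
      intro t ht
      rw [Finset.sum_const, nsmul_eq_mul]
      exact mul_le_mul_of_nonneg_right (by exact_mod_cast hcard1 t ht) (hgnn t)
    calc ∑ t ∈ Finset.Icc 1 N, ∑ τ ∈ m t, g t
        ≤ ∑ t ∈ Finset.Icc 1 N, (dmax : ℝ) * g t := Finset.sum_le_sum h1
      _ = (dmax : ℝ) * S := by rw [hSdef, Finset.mul_sum]
  have hsw : ∑ t ∈ Finset.Icc 1 N, ∑ τ ∈ m t, g τ ≤ (dmax : ℝ) * S := by
    have h1 : ∀ t ∈ Finset.Icc 1 N, ∑ τ ∈ m t, g τ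
        = ∑ τ ∈ Finset.Icc 1 N, if τ ∈ m t then g τ else 0 := by
      intro t ht
      rw [Finset.sum_ite_mem, Finset.inter_eq_right.mpr (hmsub t ht)]
    rw [Finset.sum_congr rfl h1, Finset.sum_comm]
    have h2 : ∀ τ ∈ Finset.Icc 1 N,
        (∑ t ∈ Finset.Icc 1 N, if τ ∈ m t then g τ else 0) ≤ (dmax : ℝ) * g τ := by
      intro τ hτ
      rw [← Finset.sum_filter, Finset.sum_const, nsmul_eq_mul]
      exact mul_le_mul_of_nonneg_right (by exact_mod_cast hcard2 τ hτ) (hgnn τ)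
    calc ∑ τ ∈ Finset.Icc 1 N, ∑ t ∈ Finset.Icc 1 N, (if τ ∈ m t then g τ else 0)
        ≤ ∑ τ ∈ Finset.Icc 1 N, (dmax : ℝ) * g τ := Finset.sum_le_sum h2
      _ = (dmax : ℝ) * S := by rw [hSdef, Finset.mul_sum]
  -- per-round bound on the LHS
  have key1 : ∀ t ∈ Finset.Icc 1 N,
      Real.sqrt (a t ⬝ᵥ (A (t - 1))⁻¹.mulVec (a t)) *
        (∑ τ ∈ m t, Real.sqrt (a τ ⬝ᵥ (A (t - 1))⁻¹.mulVec (a τ)))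
      ≤ ∑ τ ∈ m t, (g t + g τ) / 2 := by
    intro t ht
    obtain ⟨ht1, htN⟩ := Finset.mem_Icc.mp ht
    rw [Finset.mul_sum]
    apply Finset.sum_le_sum
    intro τ hτ
    have hτ' := hτ
    rw [hm t, Finset.mem_filter, Finset.mem_Ico] at hτ'
    obtain ⟨⟨hτ1, hτt⟩, _⟩ := hτ'
    have hf1 : a t ⬝ᵥ (A (t-1))⁻¹ *ᵥ (a t) ≤ g t := hfg t ht t ht1 le_rfl
    have hf2 : a τ ⬝ᵥ (A (t-1))⁻¹ *ᵥ (a τ) ≤ g τ := hfg t ht τ hτ1 (le_of_lt hτt)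
    have s1 : Real.sqrt (a t ⬝ᵥ (A (t-1))⁻¹.mulVec (a t)) ≤ Real.sqrt (g t) :=
      Real.sqrt_le_sqrt hf1
    have s2 : Real.sqrt (a τ ⬝ᵥ (A (t-1))⁻¹.mulVec (a τ)) ≤ Real.sqrt (g τ) :=
      Real.sqrt_le_sqrt hf2
    calc Real.sqrt (a t ⬝ᵥ (A (t-1))⁻¹.mulVec (a t)) *
          Real.sqrt (a τ ⬝ᵥ (A (t-1))⁻¹.mulVec (a τ))
        ≤ Real.sqrt (g t) * Real.sqrt (g τ) :=
          mul_le_mul s1 s2 (Real.sqrt_nonneg _) (Real.sqrt_nonneg _)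
      _ ≤ (g t + g τ) / 2 := by
          nlinarith [Real.sq_sqrt (hgnn t), Real.sq_sqrt (hgnn τ),
            sq_nonneg (Real.sqrt (g t) - Real.sqrt (g τ))]
  have hmain1 : ∑ t ∈ Finset.Icc 1 N,
      Real.sqrt (a t ⬝ᵥ (A (t - 1))⁻¹.mulVec (a t)) *
        (∑ τ ∈ m t, Real.sqrt (a τ ⬝ᵥ (A (t - 1))⁻¹.mulVec (a τ)))
      ≤ (dmax : ℝ) * S := by
    have e1 : ∀ t ∈ Finset.Icc 1 N, ∑ τ ∈ m t, (g t + g τ) / 2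
        = ((∑ τ ∈ m t, g t) + (∑ τ ∈ m t, g τ)) / 2 := by
      intro t _
      rw [← Finset.sum_add_distrib, ← Finset.sum_div]
    calc ∑ t ∈ Finset.Icc 1 N,
          Real.sqrt (a t ⬝ᵥ (A (t - 1))⁻¹.mulVec (a t)) *
            (∑ τ ∈ m t, Real.sqrt (a τ ⬝ᵥ (A (t - 1))⁻¹.mulVec (a τ)))
        ≤ ∑ t ∈ Finset.Icc 1 N, ∑ τ ∈ m t, (g t + g τ) / 2 := Finset.sum_le_sum key1
      _ = ((∑ t ∈ Finset.Icc 1 N, ∑ τ ∈ m t, g t)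
            + (∑ t ∈ Finset.Icc 1 N, ∑ τ ∈ m t, g τ)) / 2 := by
          rw [Finset.sum_congr rfl e1, ← Finset.sum_div, Finset.sum_add_distrib]
      _ ≤ ((dmax : ℝ) * S + (dmax : ℝ) * S) / 2 := by
          apply div_le_div_of_nonneg_right ?_ (by norm_num)
          exact add_le_add hsw2 hsw
      _ = (dmax : ℝ) * S := by ring
  -- potential bound
  have hpot : φ * S ≤ (φ * L ^ 2 / η 0 + 1)
      * (Real.log (B N).det - Real.log (B 0).det) := by
    have hper : ∀ t ∈ Finset.Icc 1 N,
        φ * g t ≤ (φ * L ^ 2 / η 0 + 1) * Real.log (1 + φ * g t) := by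
      intro t ht
      have hu0 : 0 ≤ φ * g t := mul_nonneg hφ.le (hgnn t)
      have huU : φ * g t ≤ φ * L ^ 2 / η 0 := by
        calc φ * g t ≤ φ * (L^2 / η 0) := mul_le_mul_of_nonneg_left (hgle t ht) hφ.le
          _ = φ * L ^ 2 / η 0 := by ring
      have hlg := log_one_add_ge hu0
      have h1u : (0:ℝ) < 1 + φ * g t := hgpos t
      have hlognn : 0 ≤ Real.log (1 + φ * g t) := Real.log_nonneg (by linarith)
      have h2 : φ * g t ≤ (1 + φ * g t) * Real.log (1 + φ * g t) := by
        have h := (div_le_iff₀ h1u).mp hlg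
        linarith
      calc φ * g t ≤ (1 + φ * g t) * Real.log (1 + φ * g t) := h2
        _ ≤ (φ * L ^ 2 / η 0 + 1) * Real.log (1 + φ * g t) := by
            apply mul_le_mul_of_nonneg_right ?_ hlognn
            linarith
    calc φ * S = ∑ t ∈ Finset.Icc 1 N, φ * g t := by rw [hSdef, Finset.mul_sum]
      _ ≤ ∑ t ∈ Finset.Icc 1 N, (φ * L ^ 2 / η 0 + 1) * Real.log (1 + φ * g t) :=
          Finset.sum_le_sum hper
      _ = (φ * L ^ 2 / η 0 + 1) * ∑ t ∈ Finset.Icc 1 N, Real.log (1 + φ * g t) :=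
          (Finset.mul_sum _ _ _).symm
      _ = (φ * L ^ 2 / η 0 + 1) * (Real.log (B N).det - Real.log (B 0).det) := by
          rw [htel]
  -- final combination
  have hUpos : (0:ℝ) < φ * L ^ 2 / η 0 + 1 := by positivity
  have hlognn2 : 0 ≤ Real.log (1 + φ * L ^ 2 * N / (η 0 * n)) := by
    apply Real.log_nonneg
    have : (0:ℝ) ≤ φ * L ^ 2 * N / (η 0 * n) := by positivity
    linarith
  have hpot2 : φ * S ≤ (φ * L ^ 2 / η 0 + 1)
      * (n * Real.log (1 + φ * L ^ 2 * N / (η 0 * n))) :=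
    hpot.trans (mul_le_mul_of_nonneg_left hlogdet hUpos.le)
  have hfinal : (dmax : ℝ) * S ≤ 2 * n * dmax / φ * (φ * L ^ 2 / η 0 + 1) *
      Real.log (1 + φ * L ^ 2 * N / (η 0 * n)) := by
    have hdm : (0:ℝ) ≤ (dmax : ℝ) := Nat.cast_nonneg _
    have hSle : S ≤ (φ * L ^ 2 / η 0 + 1)
        * (n * Real.log (1 + φ * L ^ 2 * N / (η 0 * n))) / φ := by
      rw [le_div_iff₀ hφ]
      linarith [hpot2]
    calc (dmax : ℝ) * S
        ≤ (dmax : ℝ) * ((φ * L ^ 2 / η 0 + 1)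
            * (n * Real.log (1 + φ * L ^ 2 * N / (η 0 * n))) / φ) :=
          mul_le_mul_of_nonneg_left hSle hdm
      _ = (n : ℝ) * dmax / φ * (φ * L ^ 2 / η 0 + 1) *
            Real.log (1 + φ * L ^ 2 * N / (η 0 * n)) := by ring
      _ ≤ 2 * n * dmax / φ * (φ * L ^ 2 / η 0 + 1) *
            Real.log (1 + φ * L ^ 2 * N / (η 0 * n)) := by
          have hnn : (0:ℝ) ≤ (n : ℝ) * dmax / φ * (φ * L ^ 2 / η 0 + 1) *
              Real.log (1 + φ * L ^ 2 * N / (η 0 * n)) := by positivity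
          have h2X : 2 * (n:ℝ) * dmax / φ * (φ * L ^ 2 / η 0 + 1) *
              Real.log (1 + φ * L ^ 2 * N / (η 0 * n))
              = 2 * ((n:ℝ) * dmax / φ * (φ * L ^ 2 / η 0 + 1) *
                Real.log (1 + φ * L ^ 2 * N / (η 0 * n))) := by ring
          rw [h2X]
          linarith
  exact hmain1.trans hfinal
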